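/- The flexible gadget has exactly seven subtours, namely F1, F2, F3, F4, N1, N2, and N3. Moreover: F1 is a single path with endpoints Z and Z'; F2 is the disjoint union of a path with endpoints X and X' and a path with endpoints Z and Z'; F3 is the disjoint union of a path with endpoints Y and Y' and a path with endpoints Z and Z'; F4 is the disjoint union of three paths with endpoint pairs (X, X'), (Y, Y'), and (Z, Z'); and none of N1, N2, N3 is of one of these four types. In particular, for each of these four standard types the flexible gadget has a unique subtour of that type, and it has exactly three non-standard subtours. -/

import Mathlib

open SimpleGraph

noncomputable section

/-- The degree of a vertex `v` in a simple graph `G` (as a set cardinality). -/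
def gdeg {V : Type*} (G : SimpleGraph V) (v : V) : ℕ := {u | G.Adj v u}.ncard

/-- The 8 vertices of the flexible gadget. -/
inductive FGV : Type
  | X | X' | Y | Y' | Z | Z' | R | S
  deriving DecidableEq

open FGV

/-- The four subdivision edges of the flexible gadget. -/
def flexBase : Set (Sym2 FGV) := {s(X, R), s(R, X'), s(Y', S), s(S, Y)}

/-- The edge set of the flexible gadget. -/
def flexEdges : Set (Sym2 FGV) :=
  flexBase ∪ {s(Z, X), s(Y, Z'), s(Z, Z'), s(X', Y'), s(Y', Z), s(X', Z')}

/-- The flexible gadget. -/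
def flexGadget : SimpleGraph FGV := SimpleGraph.fromEdgeSet flexEdges

section Helpers

open Classical in
lemma ncard_sub_pair {α : Type*} {a b : α} {s : Set α} (hab : a ≠ b) (hs : s ⊆ {a, b}) :
    s.ncard = (if a ∈ s then 1 else 0) + (if b ∈ s then 1 else 0) := by
  have key : ∀ x ∈ s, x = a ∨ x = b := fun x hx => by simpa using hs hx
  by_cases ha : a ∈ s <;> by_cases hb : b ∈ s
  · have hseq : s = {a, b} := by
      apply Set.Subset.antisymm hs
      intro x hx
      rcases (by simpa using hx : x = a ∨ x = b) with rfl | rfl <;> assumption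
    rw [if_pos ha, if_pos hb, hseq, Set.ncard_pair hab]
  · have hseq : s = {a} := by
      apply Set.Subset.antisymm
      · intro x hx
        rcases key x hx with rfl | rfl
        · rfl
        · exact absurd hx hb
      · intro x hx
        rcases (by simpa using hx : x = a) with rfl; assumption
    rw [if_pos ha, if_neg hb, hseq, Set.ncard_singleton]
  · have hseq : s = {b} := by
      apply Set.Subset.antisymm
      · intro x hx
        rcases key x hx with rfl | rfl
        · exact absurd hx ha
        · rfl
      · intro x hx
        rcases (by simpa using hx : x = b) with rfl; assumption
    rw [if_neg ha, if_pos hb, hseq, Set.ncard_singleton]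
  · have hseq : s = ∅ := Set.eq_empty_of_forall_notMem fun x hx => by
      rcases key x hx with rfl | rfl
      exacts [ha hx, hb hx]
    rw [if_neg ha, if_neg hb, hseq, Set.ncard_empty]

open Classical in
lemma ncard_sub_triple {α : Type*} {a b c : α} {s : Set α} (hab : a ≠ b) (hac : a ≠ c)
    (hbc : b ≠ c) (hs : s ⊆ {a, b, c}) :
    s.ncard = (if a ∈ s then 1 else 0) + (if b ∈ s then 1 else 0) + (if c ∈ s then 1 else 0) := by
  have key : ∀ x ∈ s, x = a ∨ x = b ∨ x = c := fun x hx => by simpa using hs hx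
  by_cases ha : a ∈ s
  · have h2 : s \ {a} ⊆ {b, c} := by
      rintro x ⟨hx, hxa⟩
      have hxa' : x ≠ a := by simpa using hxa
      rcases key x hx with rfl | rfl | rfl
      · exact absurd rfl hxa'
      · exact Set.mem_insert _ _
      · exact Set.mem_insert_of_mem _ rfl
    have hfin : (s \ {a}).Finite := ((Set.finite_singleton c).insert b).subset h2
    have h3 : s = insert a (s \ {a}) := by
      ext x; constructor
      · intro hx
        by_cases hxa : x = a
        · exact hxa ▸ Set.mem_insert _ _
        · exact Set.mem_insert_of_mem _ ⟨hx, by simpa using hxa⟩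
      · intro hx
        rw [Set.mem_insert_iff] at hx
        rcases hx with rfl | hx2
        · exact ha
        · exact hx2.1
    have h4 : a ∉ s \ {a} := fun h => (by simpa using h.2 : a ≠ a) rfl
    have hb2 : (b ∈ s \ {a}) ↔ (b ∈ s) := by simp [Set.mem_diff, hab.symm]
    have hc2 : (c ∈ s \ {a}) ↔ (c ∈ s) := by simp [Set.mem_diff, hac.symm]
    have hkey : s.ncard = (if b ∈ s \ {a} then 1 else 0) + (if c ∈ s \ {a} then 1 else 0) + 1 := by
      conv_lhs => rw [h3]
      rw [Set.ncard_insert_of_notMem h4 hfin, ncard_sub_pair hbc h2]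
      congr!
    rw [hkey]
    by_cases hb : b ∈ s <;> by_cases hc : c ∈ s <;>
      simp [Set.mem_diff, Set.mem_singleton_iff, hab.symm, hac.symm, ha, hb, hc]
  · have h2 : s ⊆ {b, c} := by
      intro x hx
      rcases key x hx with rfl | rfl | rfl
      · exact absurd hx ha
      · exact Set.mem_insert _ _
      · exact Set.mem_insert_of_mem _ rfl
    rw [ncard_sub_pair hbc h2, if_neg ha]
    ring

end Helpers

section Infra

instance : Fintype FGV :=
  ⟨⟨{X, X', Y, Y', Z, Z', R, S}, by decide⟩, fun x => by cases x <;> decide⟩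

lemma mem_flexEdges_iff (e : Sym2 FGV) : e ∈ flexEdges ↔
    e = s(X, R) ∨ e = s(R, X') ∨ e = s(Y', S) ∨ e = s(S, Y) ∨ e = s(Z, X) ∨ e = s(Y, Z') ∨
      e = s(Z, Z') ∨ e = s(X', Y') ∨ e = s(Y', Z) ∨ e = s(X', Z') := by
  simp only [flexEdges, flexBase, Set.mem_union, Set.mem_insert_iff, Set.mem_singleton_iff]
  tauto

open Classical in
lemma nbr_iff (T : Set (Sym2 FGV)) {v u : FGV} (h : v ≠ u) :
    (u ∈ {w | (SimpleGraph.fromEdgeSet T).Adj v w}) = (s(v, u) ∈ T) := by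
  simp [Set.mem_setOf_eq, fromEdgeSet_adj, h]

variable {T : Set (Sym2 FGV)}

lemma nbr_sub (hT : T ⊆ flexEdges) (v : FGV) (L : Set FGV)
    (hL : ∀ u : FGV, s(v, u) ∈ flexEdges → v ≠ u → u ∈ L) :
    {w | (SimpleGraph.fromEdgeSet T).Adj v w} ⊆ L := by
  intro u hu
  rw [Set.mem_setOf_eq, fromEdgeSet_adj] at hu
  exact hL u (hT hu.1) hu.2

open Classical in
lemma degR (hT : T ⊆ flexEdges) :
    gdeg (SimpleGraph.fromEdgeSet T) R =
      (if s(X, R) ∈ T then 1 else 0) + (if s(R, X') ∈ T then 1 else 0) := by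
  have hs : {w | (SimpleGraph.fromEdgeSet T).Adj R w} ⊆ ({X, X'} : Set FGV) := by
    apply nbr_sub hT
    intro u hm hne
    rw [mem_flexEdges_iff] at hm
    cases u <;> simp_all [Sym2.eq_iff]
  rw [gdeg, ncard_sub_pair (by decide) hs, nbr_iff T (by decide : R ≠ X),
    nbr_iff T (by decide : R ≠ X'), show s(R, X) = s(X, R) from Sym2.eq_swap]

open Classical in
lemma degS (hT : T ⊆ flexEdges) :
    gdeg (SimpleGraph.fromEdgeSet T) S =
      (if s(Y', S) ∈ T then 1 else 0) + (if s(S, Y) ∈ T then 1 else 0) := by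
  have hs : {w | (SimpleGraph.fromEdgeSet T).Adj S w} ⊆ ({Y', Y} : Set FGV) := by
    apply nbr_sub hT
    intro u hm hne
    rw [mem_flexEdges_iff] at hm
    cases u <;> simp_all [Sym2.eq_iff]
  rw [gdeg, ncard_sub_pair (by decide) hs, nbr_iff T (by decide : S ≠ Y'),
    nbr_iff T (by decide : S ≠ Y), show s(S, Y') = s(Y', S) from Sym2.eq_swap]

open Classical in
lemma degZ (hT : T ⊆ flexEdges) :
    gdeg (SimpleGraph.fromEdgeSet T) Z =
      (if s(Z, X) ∈ T then 1 else 0) + (if s(Z, Z') ∈ T then 1 else 0) +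
        (if s(Y', Z) ∈ T then 1 else 0) := by
  have hs : {w | (SimpleGraph.fromEdgeSet T).Adj Z w} ⊆ ({X, Z', Y'} : Set FGV) := by
    apply nbr_sub hT
    intro u hm hne
    rw [mem_flexEdges_iff] at hm
    cases u <;> simp_all [Sym2.eq_iff]
  rw [gdeg, ncard_sub_triple (by decide) (by decide) (by decide) hs,
    nbr_iff T (by decide : Z ≠ X), nbr_iff T (by decide : Z ≠ Z'),
    nbr_iff T (by decide : Z ≠ Y'), show s(Z, Y') = s(Y', Z) from Sym2.eq_swap]

open Classical in
lemma degZ' (hT : T ⊆ flexEdges) :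
    gdeg (SimpleGraph.fromEdgeSet T) Z' =
      (if s(Y, Z') ∈ T then 1 else 0) + (if s(Z, Z') ∈ T then 1 else 0) +
        (if s(X', Z') ∈ T then 1 else 0) := by
  have hs : {w | (SimpleGraph.fromEdgeSet T).Adj Z' w} ⊆ ({Y, Z, X'} : Set FGV) := by
    apply nbr_sub hT
    intro u hm hne
    rw [mem_flexEdges_iff] at hm
    cases u <;> simp_all [Sym2.eq_iff]
  rw [gdeg, ncard_sub_triple (by decide) (by decide) (by decide) hs,
    nbr_iff T (by decide : Z' ≠ Y), nbr_iff T (by decide : Z' ≠ Z),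
    nbr_iff T (by decide : Z' ≠ X'), show s(Z', Y) = s(Y, Z') from Sym2.eq_swap,
    show s(Z', Z) = s(Z, Z') from Sym2.eq_swap, show s(Z', X') = s(X', Z') from Sym2.eq_swap]

open Classical in
lemma degX' (hT : T ⊆ flexEdges) :
    gdeg (SimpleGraph.fromEdgeSet T) X' =
      (if s(R, X') ∈ T then 1 else 0) + (if s(X', Y') ∈ T then 1 else 0) +
        (if s(X', Z') ∈ T then 1 else 0) := by
  have hs : {w | (SimpleGraph.fromEdgeSet T).Adj X' w} ⊆ ({R, Y', Z'} : Set FGV) := by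
    apply nbr_sub hT
    intro u hm hne
    rw [mem_flexEdges_iff] at hm
    cases u <;> simp_all [Sym2.eq_iff]
  rw [gdeg, ncard_sub_triple (by decide) (by decide) (by decide) hs,
    nbr_iff T (by decide : X' ≠ R), nbr_iff T (by decide : X' ≠ Y'),
    nbr_iff T (by decide : X' ≠ Z'), show s(X', R) = s(R, X') from Sym2.eq_swap]

open Classical in
lemma degY' (hT : T ⊆ flexEdges) :
    gdeg (SimpleGraph.fromEdgeSet T) Y' =
      (if s(Y', S) ∈ T then 1 else 0) + (if s(X', Y') ∈ T then 1 else 0) +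
        (if s(Y', Z) ∈ T then 1 else 0) := by
  have hs : {w | (SimpleGraph.fromEdgeSet T).Adj Y' w} ⊆ ({S, X', Z} : Set FGV) := by
    apply nbr_sub hT
    intro u hm hne
    rw [mem_flexEdges_iff] at hm
    cases u <;> simp_all [Sym2.eq_iff]
  rw [gdeg, ncard_sub_triple (by decide) (by decide) (by decide) hs,
    nbr_iff T (by decide : Y' ≠ S), nbr_iff T (by decide : Y' ≠ X'),
    nbr_iff T (by decide : Y' ≠ Z), show s(Y', X') = s(X', Y') from Sym2.eq_swap]

end Infra


/-- A subtour of the flexible gadget, given by its edge set `T`: a spanning disjoint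
union of paths (acyclic, all degrees 1 or 2) in which `Z` and `Z'` have degree one and
every degree-one vertex lies in `{X, X', Y, Y', Z, Z'}`. -/
def IsFlexSubtour (T : Set (Sym2 FGV)) : Prop :=
  T ⊆ flexGadget.edgeSet ∧
  (SimpleGraph.fromEdgeSet T).IsAcyclic ∧
  (∀ v : FGV, gdeg (SimpleGraph.fromEdgeSet T) v = 1 ∨
      gdeg (SimpleGraph.fromEdgeSet T) v = 2) ∧
  gdeg (SimpleGraph.fromEdgeSet T) Z = 1 ∧
  gdeg (SimpleGraph.fromEdgeSet T) Z' = 1 ∧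
  (∀ v : FGV, gdeg (SimpleGraph.fromEdgeSet T) v = 1 →
      v ∈ ({X, X', Y, Y', Z, Z'} : Set FGV))

/-- The four standard subtours of the flexible gadget. -/
def F1 : Set (Sym2 FGV) := flexBase ∪ {s(Z, X), s(Y, Z'), s(X', Y')}
def F2 : Set (Sym2 FGV) := flexBase ∪ {s(Y, Z'), s(Y', Z)}
def F3 : Set (Sym2 FGV) := flexBase ∪ {s(Z, X), s(X', Z')}
def F4 : Set (Sym2 FGV) := flexBase ∪ {s(Z, Z')}

/-- The three non-standard subtours of the flexible gadget. -/
def N1 : Set (Sym2 FGV) := flexBase ∪ {s(Y', Z), s(X', Z')}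
def N2 : Set (Sym2 FGV) := flexBase ∪ {s(Z, Z'), s(X', Y')}
def N3 : Set (Sym2 FGV) := flexBase ∪ {s(Z, X), s(Z', Y)}

section Infra2

lemma mem_F1_iff (e : Sym2 FGV) : e ∈ F1 ↔
    e = s(X, R) ∨ e = s(R, X') ∨ e = s(Y', S) ∨ e = s(S, Y) ∨
      e = s(Z, X) ∨ e = s(Y, Z') ∨ e = s(X', Y') := by
  simp only [F1, flexBase, Set.mem_union, Set.mem_insert_iff, Set.mem_singleton_iff]; tauto

lemma mem_F2_iff (e : Sym2 FGV) : e ∈ F2 ↔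
    e = s(X, R) ∨ e = s(R, X') ∨ e = s(Y', S) ∨ e = s(S, Y) ∨
      e = s(Y, Z') ∨ e = s(Y', Z) := by
  simp only [F2, flexBase, Set.mem_union, Set.mem_insert_iff, Set.mem_singleton_iff]; tauto

lemma mem_F3_iff (e : Sym2 FGV) : e ∈ F3 ↔
    e = s(X, R) ∨ e = s(R, X') ∨ e = s(Y', S) ∨ e = s(S, Y) ∨
      e = s(Z, X) ∨ e = s(X', Z') := by
  simp only [F3, flexBase, Set.mem_union, Set.mem_insert_iff, Set.mem_singleton_iff]; tauto

lemma mem_F4_iff (e : Sym2 FGV) : e ∈ F4 ↔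
    e = s(X, R) ∨ e = s(R, X') ∨ e = s(Y', S) ∨ e = s(S, Y) ∨ e = s(Z, Z') := by
  simp only [F4, flexBase, Set.mem_union, Set.mem_insert_iff, Set.mem_singleton_iff]; tauto

lemma mem_N1_iff (e : Sym2 FGV) : e ∈ N1 ↔
    e = s(X, R) ∨ e = s(R, X') ∨ e = s(Y', S) ∨ e = s(S, Y) ∨
      e = s(Y', Z) ∨ e = s(X', Z') := by
  simp only [N1, flexBase, Set.mem_union, Set.mem_insert_iff, Set.mem_singleton_iff]; tauto

lemma mem_N2_iff (e : Sym2 FGV) : e ∈ N2 ↔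
    e = s(X, R) ∨ e = s(R, X') ∨ e = s(Y', S) ∨ e = s(S, Y) ∨
      e = s(Z, Z') ∨ e = s(X', Y') := by
  simp only [N2, flexBase, Set.mem_union, Set.mem_insert_iff, Set.mem_singleton_iff]; tauto

lemma mem_N3_iff (e : Sym2 FGV) : e ∈ N3 ↔
    e = s(X, R) ∨ e = s(R, X') ∨ e = s(Y', S) ∨ e = s(S, Y) ∨
      e = s(Z, X) ∨ e = s(Y, Z') := by
  have hsw : s(Z', Y) = s(Y, Z') := Sym2.eq_swap
  show e ∈ flexBase ∪ {s(Z, X), s(Z', Y)} ↔ _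
  rw [show ({s(Z, X), s(Z', Y)} : Set (Sym2 FGV)) = {s(Z, X), s(Y, Z')} by rw [hsw]]
  simp only [flexBase, Set.mem_union, Set.mem_insert_iff, Set.mem_singleton_iff]; tauto

instance : DecidablePred (· ∈ F1) := fun e => decidable_of_iff _ (mem_F1_iff e).symm
instance : DecidablePred (· ∈ F2) := fun e => decidable_of_iff _ (mem_F2_iff e).symm
instance : DecidablePred (· ∈ F3) := fun e => decidable_of_iff _ (mem_F3_iff e).symm
instance : DecidablePred (· ∈ F4) := fun e => decidable_of_iff _ (mem_F4_iff e).symm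
instance : DecidablePred (· ∈ N1) := fun e => decidable_of_iff _ (mem_N1_iff e).symm
instance : DecidablePred (· ∈ N2) := fun e => decidable_of_iff _ (mem_N2_iff e).symm
instance : DecidablePred (· ∈ N3) := fun e => decidable_of_iff _ (mem_N3_iff e).symm

instance decFromEdgeSetAdj {V : Type} [DecidableEq V] (s : Set (Sym2 V)) [DecidablePred (· ∈ s)] :
    DecidableRel (SimpleGraph.fromEdgeSet s).Adj := fun a b =>
  decidable_of_iff (s(a, b) ∈ s ∧ a ≠ b) (by simp [fromEdgeSet_adj])

instance decSdiffAdj {V : Type} [DecidableEq V] (G H : SimpleGraph V) [DecidableRel G.Adj]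
    [DecidableRel H.Adj] : DecidableRel (G \ H).Adj := fun a b =>
  decidable_of_iff (G.Adj a b ∧ ¬ H.Adj a b) (by simp [sdiff_adj])

instance decIsAcyclic {V : Type} [Fintype V] [DecidableEq V] (G : SimpleGraph V)
    [DecidableRel G.Adj] : Decidable G.IsAcyclic :=
  decidable_of_iff (∀ v w, G.Adj v w → ¬(G \ SimpleGraph.fromEdgeSet {s(v, w)}).Reachable v w) (by
    rw [isAcyclic_iff_forall_adj_isBridge]
    constructor
    · intro h v w hvw; exact h v w hvw
    · intro h v w hvw; exact h hvw)

lemma gdeg_eq_degree {V : Type} [Fintype V] [DecidableEq V] (G : SimpleGraph V)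
    [DecidableRel G.Adj] (v : V) : gdeg G v = G.degree v := by
  rw [degree, neighborFinset_def]
  exact Set.ncard_eq_toFinset_card' _

lemma edgeSet_flexGadget : flexGadget.edgeSet = flexEdges := by
  rw [flexGadget, edgeSet_fromEdgeSet]
  apply Set.Subset.antisymm (Set.diff_subset)
  intro e he
  refine ⟨he, ?_⟩
  rw [mem_flexEdges_iff] at he
  rcases he with rfl | rfl | rfl | rfl | rfl | rfl | rfl | rfl | rfl | rfl <;> simp

end Infra2

section Main
set_option maxHeartbeats 4000000

open Classical in
lemma two_of_ites {p q : Prop} (h : (if p then 1 else 0) + (if q then 1 else 0) = 2) :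
    p ∧ q := by
  by_cases hp : p <;> by_cases hq : q <;> simp [hp, hq] at h <;> exact ⟨hp, hq⟩


lemma sub_F1 : F1 ⊆ flexEdges := by
  intro e he
  rw [mem_flexEdges_iff]
  rcases (mem_F1_iff e).mp he with rfl | rfl | rfl | rfl | rfl | rfl | rfl <;> simp

lemma isft_F1 : IsFlexSubtour F1 := by
  refine ⟨by rw [edgeSet_flexGadget]; exact sub_F1, by decide, ?_, ?_, ?_, ?_⟩
  · intro v; rw [gdeg_eq_degree]; revert v; decide
  · rw [gdeg_eq_degree]; decide
  · rw [gdeg_eq_degree]; decide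
  · intro v
    rw [gdeg_eq_degree]
    simp only [Set.mem_insert_iff, Set.mem_singleton_iff]
    revert v; decide


lemma sub_F2 : F2 ⊆ flexEdges := by
  intro e he
  rw [mem_flexEdges_iff]
  rcases (mem_F2_iff e).mp he with rfl | rfl | rfl | rfl | rfl | rfl <;> simp

lemma isft_F2 : IsFlexSubtour F2 := by
  refine ⟨by rw [edgeSet_flexGadget]; exact sub_F2, by decide, ?_, ?_, ?_, ?_⟩
  · intro v; rw [gdeg_eq_degree]; revert v; decide
  · rw [gdeg_eq_degree]; decide
  · rw [gdeg_eq_degree]; decide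
  · intro v
    rw [gdeg_eq_degree]
    simp only [Set.mem_insert_iff, Set.mem_singleton_iff]
    revert v; decide


lemma sub_F3 : F3 ⊆ flexEdges := by
  intro e he
  rw [mem_flexEdges_iff]
  rcases (mem_F3_iff e).mp he with rfl | rfl | rfl | rfl | rfl | rfl <;> simp

lemma isft_F3 : IsFlexSubtour F3 := by
  refine ⟨by rw [edgeSet_flexGadget]; exact sub_F3, by decide, ?_, ?_, ?_, ?_⟩
  · intro v; rw [gdeg_eq_degree]; revert v; decide
  · rw [gdeg_eq_degree]; decide
  · rw [gdeg_eq_degree]; decide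
  · intro v
    rw [gdeg_eq_degree]
    simp only [Set.mem_insert_iff, Set.mem_singleton_iff]
    revert v; decide


lemma sub_F4 : F4 ⊆ flexEdges := by
  intro e he
  rw [mem_flexEdges_iff]
  rcases (mem_F4_iff e).mp he with rfl | rfl | rfl | rfl | rfl <;> simp

lemma isft_F4 : IsFlexSubtour F4 := by
  refine ⟨by rw [edgeSet_flexGadget]; exact sub_F4, by decide, ?_, ?_, ?_, ?_⟩
  · intro v; rw [gdeg_eq_degree]; revert v; decide
  · rw [gdeg_eq_degree]; decide
  · rw [gdeg_eq_degree]; decide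
  · intro v
    rw [gdeg_eq_degree]
    simp only [Set.mem_insert_iff, Set.mem_singleton_iff]
    revert v; decide


lemma sub_N1 : N1 ⊆ flexEdges := by
  intro e he
  rw [mem_flexEdges_iff]
  rcases (mem_N1_iff e).mp he with rfl | rfl | rfl | rfl | rfl | rfl <;> simp

lemma isft_N1 : IsFlexSubtour N1 := by
  refine ⟨by rw [edgeSet_flexGadget]; exact sub_N1, by decide, ?_, ?_, ?_, ?_⟩
  · intro v; rw [gdeg_eq_degree]; revert v; decide
  · rw [gdeg_eq_degree]; decide
  · rw [gdeg_eq_degree]; decide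
  · intro v
    rw [gdeg_eq_degree]
    simp only [Set.mem_insert_iff, Set.mem_singleton_iff]
    revert v; decide


lemma sub_N2 : N2 ⊆ flexEdges := by
  intro e he
  rw [mem_flexEdges_iff]
  rcases (mem_N2_iff e).mp he with rfl | rfl | rfl | rfl | rfl | rfl <;> simp

lemma isft_N2 : IsFlexSubtour N2 := by
  refine ⟨by rw [edgeSet_flexGadget]; exact sub_N2, by decide, ?_, ?_, ?_, ?_⟩
  · intro v; rw [gdeg_eq_degree]; revert v; decide
  · rw [gdeg_eq_degree]; decide
  · rw [gdeg_eq_degree]; decide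
  · intro v
    rw [gdeg_eq_degree]
    simp only [Set.mem_insert_iff, Set.mem_singleton_iff]
    revert v; decide


lemma sub_N3 : N3 ⊆ flexEdges := by
  intro e he
  rw [mem_flexEdges_iff]
  rcases (mem_N3_iff e).mp he with rfl | rfl | rfl | rfl | rfl | rfl <;> simp

lemma isft_N3 : IsFlexSubtour N3 := by
  refine ⟨by rw [edgeSet_flexGadget]; exact sub_N3, by decide, ?_, ?_, ?_, ?_⟩
  · intro v; rw [gdeg_eq_degree]; revert v; decide
  · rw [gdeg_eq_degree]; decide
  · rw [gdeg_eq_degree]; decide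
  · intro v
    rw [gdeg_eq_degree]
    simp only [Set.mem_insert_iff, Set.mem_singleton_iff]
    revert v; decide


set_option maxHeartbeats 2000000 in
lemma forward_subtour (T : Set (Sym2 FGV)) (h : IsFlexSubtour T) :
    T = F1 ∨ T = F2 ∨ T = F3 ∨ T = F4 ∨ T = N1 ∨ T = N2 ∨ T = N3 := by
  obtain ⟨hsub0, hac, hdeg, hZ, hZ', hone⟩ := h
  rw [edgeSet_flexGadget] at hsub0
  have hsub : T ⊆ flexEdges := hsub0
  have hdegR : gdeg (SimpleGraph.fromEdgeSet T) R = 2 := by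
    rcases hdeg R with h | h
    · exact absurd (hone R h) (by simp)
    · exact h
  have hdegS : gdeg (SimpleGraph.fromEdgeSet T) S = 2 := by
    rcases hdeg S with h | h
    · exact absurd (hone S h) (by simp)
    · exact h
  rw [degR hsub] at hdegR
  rw [degS hsub] at hdegS
  obtain ⟨hb1, hb2⟩ := two_of_ites hdegR
  obtain ⟨hb3, hb4⟩ := two_of_ites hdegS
  have hX' := hdeg X'
  have hY' := hdeg Y'
  rw [degX' hsub] at hX'
  rw [degY' hsub] at hY'
  rw [degZ hsub] at hZ
  rw [degZ' hsub] at hZ'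
  by_cases p1 : s(Z, X) ∈ T <;> by_cases p2 : s(Y, Z') ∈ T <;> by_cases p3 : s(Z, Z') ∈ T <;>
    by_cases p4 : s(X', Y') ∈ T <;> by_cases p5 : s(Y', Z) ∈ T <;> by_cases p6 : s(X', Z') ∈ T <;>
    simp [p1, p2, p3, p4, p5, p6, hb2, hb3] at hZ hZ' hX' hY' <;>
    first
        |
      (refine Or.inl ?_
       apply Set.Subset.antisymm
       · intro e he
         have hm := (mem_flexEdges_iff e).mp (hsub he)
         rw [mem_F1_iff]
         rcases hm with rfl | rfl | rfl | rfl | rfl | rfl | rfl | rfl | rfl | rfl <;>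
           first
             | exact absurd he p1 | exact absurd he p2 | exact absurd he p3
             | exact absurd he p4 | exact absurd he p5 | exact absurd he p6 | simp
       · intro e he
         rcases (mem_F1_iff e).mp he with rfl | rfl | rfl | rfl | rfl | rfl | rfl <;> assumption)
        |
      (refine Or.inr (Or.inl ?_)
       apply Set.Subset.antisymm
       · intro e he
         have hm := (mem_flexEdges_iff e).mp (hsub he)
         rw [mem_F2_iff]
         rcases hm with rfl | rfl | rfl | rfl | rfl | rfl | rfl | rfl | rfl | rfl <;>
           first
             | exact absurd he p1 | exact absurd he p2 | exact absurd he p3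
             | exact absurd he p4 | exact absurd he p5 | exact absurd he p6 | simp
       · intro e he
         rcases (mem_F2_iff e).mp he with rfl | rfl | rfl | rfl | rfl | rfl <;> assumption)
        |
      (refine Or.inr (Or.inr (Or.inl ?_))
       apply Set.Subset.antisymm
       · intro e he
         have hm := (mem_flexEdges_iff e).mp (hsub he)
         rw [mem_F3_iff]
         rcases hm with rfl | rfl | rfl | rfl | rfl | rfl | rfl | rfl | rfl | rfl <;>
           first
             | exact absurd he p1 | exact absurd he p2 | exact absurd he p3
             | exact absurd he p4 | exact absurd he p5 | exact absurd he p6 | simp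
       · intro e he
         rcases (mem_F3_iff e).mp he with rfl | rfl | rfl | rfl | rfl | rfl <;> assumption)
        |
      (refine Or.inr (Or.inr (Or.inr (Or.inl ?_)))
       apply Set.Subset.antisymm
       · intro e he
         have hm := (mem_flexEdges_iff e).mp (hsub he)
         rw [mem_F4_iff]
         rcases hm with rfl | rfl | rfl | rfl | rfl | rfl | rfl | rfl | rfl | rfl <;>
           first
             | exact absurd he p1 | exact absurd he p2 | exact absurd he p3
             | exact absurd he p4 | exact absurd he p5 | exact absurd he p6 | simp
       · intro e he
         rcases (mem_F4_iff e).mp he with rfl | rfl | rfl | rfl | rfl <;> assumption)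
        |
      (refine Or.inr (Or.inr (Or.inr (Or.inr (Or.inl ?_))))
       apply Set.Subset.antisymm
       · intro e he
         have hm := (mem_flexEdges_iff e).mp (hsub he)
         rw [mem_N1_iff]
         rcases hm with rfl | rfl | rfl | rfl | rfl | rfl | rfl | rfl | rfl | rfl <;>
           first
             | exact absurd he p1 | exact absurd he p2 | exact absurd he p3
             | exact absurd he p4 | exact absurd he p5 | exact absurd he p6 | simp
       · intro e he
         rcases (mem_N1_iff e).mp he with rfl | rfl | rfl | rfl | rfl | rfl <;> assumption)
        |
      (refine Or.inr (Or.inr (Or.inr (Or.inr (Or.inr (Or.inl ?_)))))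
       apply Set.Subset.antisymm
       · intro e he
         have hm := (mem_flexEdges_iff e).mp (hsub he)
         rw [mem_N2_iff]
         rcases hm with rfl | rfl | rfl | rfl | rfl | rfl | rfl | rfl | rfl | rfl <;>
           first
             | exact absurd he p1 | exact absurd he p2 | exact absurd he p3
             | exact absurd he p4 | exact absurd he p5 | exact absurd he p6 | simp
       · intro e he
         rcases (mem_N2_iff e).mp he with rfl | rfl | rfl | rfl | rfl | rfl <;> assumption)
        |
      (refine Or.inr (Or.inr (Or.inr (Or.inr (Or.inr (Or.inr ?_)))))
       apply Set.Subset.antisymm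
       · intro e he
         have hm := (mem_flexEdges_iff e).mp (hsub he)
         rw [mem_N3_iff]
         rcases hm with rfl | rfl | rfl | rfl | rfl | rfl | rfl | rfl | rfl | rfl <;>
           first
             | exact absurd he p1 | exact absurd he p2 | exact absurd he p3
             | exact absurd he p4 | exact absurd he p5 | exact absurd he p6 | simp
       · intro e he
         rcases (mem_N3_iff e).mp he with rfl | rfl | rfl | rfl | rfl | rfl <;> assumption)

end Main


/-- `G` is a single spanning path with endpoints `z` and `z'`. -/
def IsOnePath {W : Type*} (G : SimpleGraph W) (z z' : W) : Prop :=
  G.IsAcyclic ∧ (∀ v : W, gdeg G v = 1 ∨ gdeg G v = 2) ∧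
  {v | gdeg G v = 1} = {z, z'} ∧ z ≠ z' ∧ G.Reachable z z'

/-- `G` is a spanning disjoint union of an `xx'`-path and a `zz'`-path. -/
def IsTwoPaths {W : Type*} (G : SimpleGraph W) (x x' z z' : W) : Prop :=
  G.IsAcyclic ∧ (∀ v : W, gdeg G v = 1 ∨ gdeg G v = 2) ∧
  {v | gdeg G v = 1} = {x, x', z, z'} ∧ [x, x', z, z'].Nodup ∧
  G.Reachable x x' ∧ G.Reachable z z' ∧ ¬ G.Reachable x z

/-- `G` is a spanning disjoint union of an `xx'`-path, a `yy'`-path and a `zz'`-path. -/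
def IsThreePaths {W : Type*} (G : SimpleGraph W) (x x' y y' z z' : W) : Prop :=
  G.IsAcyclic ∧ (∀ v : W, gdeg G v = 1 ∨ gdeg G v = 2) ∧
  {v | gdeg G v = 1} = {x, x', y, y', z, z'} ∧ [x, x', y, y', z, z'].Nodup ∧
  G.Reachable x x' ∧ G.Reachable y y' ∧ G.Reachable z z' ∧
  ¬ G.Reachable x y ∧ ¬ G.Reachable x z ∧ ¬ G.Reachable y z

/-- `T` is of one of the four standard types: a single `ZZ'`-path; an `XX'`-path plus a
`ZZ'`-path; a `YY'`-path plus a `ZZ'`-path; or an `XX'`-path, a `YY'`-path and a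
`ZZ'`-path. -/
def IsStandardType (T : Set (Sym2 FGV)) : Prop :=
  IsOnePath (SimpleGraph.fromEdgeSet T) Z Z' ∨
  IsTwoPaths (SimpleGraph.fromEdgeSet T) X X' Z Z' ∨
  IsTwoPaths (SimpleGraph.fromEdgeSet T) Y Y' Z Z' ∨
  IsThreePaths (SimpleGraph.fromEdgeSet T) X X' Y Y' Z Z'

section Main2
set_option maxHeartbeats 4000000

lemma degs_lemma {S : Set (Sym2 FGV)} [DecidablePred (· ∈ S)]
    (h : ∀ v : FGV, (SimpleGraph.fromEdgeSet S).degree v = 1 ∨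
      (SimpleGraph.fromEdgeSet S).degree v = 2) :
    ∀ v : FGV, gdeg (SimpleGraph.fromEdgeSet S) v = 1 ∨
      gdeg (SimpleGraph.fromEdgeSet S) v = 2 := by
  intro v; rw [gdeg_eq_degree]; exact h v

lemma deg1set_lemma {S : Set (Sym2 FGV)} [DecidablePred (· ∈ S)] (L : Set FGV)
    (h : ∀ v : FGV, (SimpleGraph.fromEdgeSet S).degree v = 1 ↔ v ∈ L) :
    {v | gdeg (SimpleGraph.fromEdgeSet S) v = 1} = L := by
  ext v; rw [Set.mem_setOf_eq, gdeg_eq_degree]; exact h v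

lemma onepath_F1 : IsOnePath (SimpleGraph.fromEdgeSet F1) Z Z' := by
  refine ⟨isft_F1.2.1, isft_F1.2.2.1, ?_, by decide, by decide⟩
  apply deg1set_lemma
  intro v
  simp only [Set.mem_insert_iff, Set.mem_singleton_iff]
  revert v; decide

lemma twopaths_F2 : IsTwoPaths (SimpleGraph.fromEdgeSet F2) X X' Z Z' := by
  refine ⟨isft_F2.2.1, isft_F2.2.2.1, ?_, by decide, by decide, by decide, by decide⟩
  apply deg1set_lemma
  intro v
  simp only [Set.mem_insert_iff, Set.mem_singleton_iff]
  revert v; decide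

lemma twopaths_F3 : IsTwoPaths (SimpleGraph.fromEdgeSet F3) Y Y' Z Z' := by
  refine ⟨isft_F3.2.1, isft_F3.2.2.1, ?_, by decide, by decide, by decide, by decide⟩
  apply deg1set_lemma
  intro v
  simp only [Set.mem_insert_iff, Set.mem_singleton_iff]
  revert v; decide

lemma threepaths_F4 : IsThreePaths (SimpleGraph.fromEdgeSet F4) X X' Y Y' Z Z' := by
  refine ⟨isft_F4.2.1, isft_F4.2.2.1, ?_, by decide, by decide, by decide, by decide,
    by decide, by decide, by decide⟩
  apply deg1set_lemma
  intro v
  simp only [Set.mem_insert_iff, Set.mem_singleton_iff]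
  revert v; decide


lemma notstd_N1 : ¬ IsStandardType N1 := by
  rintro (h | h | h | h)
  · have hmem : X ∈ {v | gdeg (SimpleGraph.fromEdgeSet N1) v = 1} := by
      rw [Set.mem_setOf_eq, gdeg_eq_degree]; decide
    rw [h.2.2.1] at hmem
    simp at hmem
  · have hmem : X' ∈ ({X, X', Z, Z'} : Set FGV) := by simp
    rw [← h.2.2.1, Set.mem_setOf_eq, gdeg_eq_degree] at hmem
    exact absurd hmem (by decide)
  · have hmem : Y' ∈ ({Y, Y', Z, Z'} : Set FGV) := by simp
    rw [← h.2.2.1, Set.mem_setOf_eq, gdeg_eq_degree] at hmem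
    exact absurd hmem (by decide)
  · have hmem : X' ∈ ({X, X', Y, Y', Z, Z'} : Set FGV) := by simp
    rw [← h.2.2.1, Set.mem_setOf_eq, gdeg_eq_degree] at hmem
    exact absurd hmem (by decide)


lemma notstd_N2 : ¬ IsStandardType N2 := by
  rintro (h | h | h | h)
  · have hmem : X ∈ {v | gdeg (SimpleGraph.fromEdgeSet N2) v = 1} := by
      rw [Set.mem_setOf_eq, gdeg_eq_degree]; decide
    rw [h.2.2.1] at hmem
    simp at hmem
  · have hmem : X' ∈ ({X, X', Z, Z'} : Set FGV) := by simp
    rw [← h.2.2.1, Set.mem_setOf_eq, gdeg_eq_degree] at hmem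
    exact absurd hmem (by decide)
  · have hmem : Y' ∈ ({Y, Y', Z, Z'} : Set FGV) := by simp
    rw [← h.2.2.1, Set.mem_setOf_eq, gdeg_eq_degree] at hmem
    exact absurd hmem (by decide)
  · have hmem : X' ∈ ({X, X', Y, Y', Z, Z'} : Set FGV) := by simp
    rw [← h.2.2.1, Set.mem_setOf_eq, gdeg_eq_degree] at hmem
    exact absurd hmem (by decide)


lemma notstd_N3 : ¬ IsStandardType N3 := by
  rintro (h | h | h | h)
  · have hmem : X' ∈ {v | gdeg (SimpleGraph.fromEdgeSet N3) v = 1} := by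
      rw [Set.mem_setOf_eq, gdeg_eq_degree]; decide
    rw [h.2.2.1] at hmem
    simp at hmem
  · have hmem : X ∈ ({X, X', Z, Z'} : Set FGV) := by simp
    rw [← h.2.2.1, Set.mem_setOf_eq, gdeg_eq_degree] at hmem
    exact absurd hmem (by decide)
  · have hmem : Y ∈ ({Y, Y', Z, Z'} : Set FGV) := by simp
    rw [← h.2.2.1, Set.mem_setOf_eq, gdeg_eq_degree] at hmem
    exact absurd hmem (by decide)
  · have hmem : X ∈ ({X, X', Y, Y', Z, Z'} : Set FGV) := by simp
    rw [← h.2.2.1, Set.mem_setOf_eq, gdeg_eq_degree] at hmem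
    exact absurd hmem (by decide)


lemma ne_sets {A B : Set (Sym2 FGV)} (e : Sym2 FGV) (h1 : e ∈ A) (h2 : e ∉ B) : A ≠ B :=
  fun h => h2 (h ▸ h1)


lemma nodup_list : [F1, F2, F3, F4, N1, N2, N3].Nodup := by
  have hne_F1_F2 : F1 ≠ F2 := ne_sets (s(Z, X)) (by decide) (by decide)
  have hne_F1_F3 : F1 ≠ F3 := ne_sets (s(Y, Z')) (by decide) (by decide)
  have hne_F1_F4 : F1 ≠ F4 := ne_sets (s(Z, X)) (by decide) (by decide)
  have hne_F1_N1 : F1 ≠ N1 := ne_sets (s(Z, X)) (by decide) (by decide)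
  have hne_F1_N2 : F1 ≠ N2 := ne_sets (s(Z, X)) (by decide) (by decide)
  have hne_F1_N3 : F1 ≠ N3 := ne_sets (s(X', Y')) (by decide) (by decide)
  have hne_F2_F3 : F2 ≠ F3 := ne_sets (s(Y, Z')) (by decide) (by decide)
  have hne_F2_F4 : F2 ≠ F4 := ne_sets (s(Y, Z')) (by decide) (by decide)
  have hne_F2_N1 : F2 ≠ N1 := ne_sets (s(Y, Z')) (by decide) (by decide)
  have hne_F2_N2 : F2 ≠ N2 := ne_sets (s(Y, Z')) (by decide) (by decide)
  have hne_F2_N3 : F2 ≠ N3 := ne_sets (s(Y', Z)) (by decide) (by decide)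
  have hne_F3_F4 : F3 ≠ F4 := ne_sets (s(Z, X)) (by decide) (by decide)
  have hne_F3_N1 : F3 ≠ N1 := ne_sets (s(Z, X)) (by decide) (by decide)
  have hne_F3_N2 : F3 ≠ N2 := ne_sets (s(Z, X)) (by decide) (by decide)
  have hne_F3_N3 : F3 ≠ N3 := ne_sets (s(X', Z')) (by decide) (by decide)
  have hne_F4_N1 : F4 ≠ N1 := ne_sets (s(Z, Z')) (by decide) (by decide)
  have hne_F4_N2 : F4 ≠ N2 := (ne_sets (s(X', Y')) (by decide) (by decide)).symm
  have hne_F4_N3 : F4 ≠ N3 := ne_sets (s(Z, Z')) (by decide) (by decide)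
  have hne_N1_N2 : N1 ≠ N2 := ne_sets (s(Y', Z)) (by decide) (by decide)
  have hne_N1_N3 : N1 ≠ N3 := ne_sets (s(Y', Z)) (by decide) (by decide)
  have hne_N2_N3 : N2 ≠ N3 := ne_sets (s(Z, Z')) (by decide) (by decide)
  simp [List.nodup_cons, hne_F1_F2, hne_F1_F3, hne_F1_F4, hne_F1_N1, hne_F1_N2, hne_F1_N3, hne_F2_F3, hne_F2_F4, hne_F2_N1, hne_F2_N2, hne_F2_N3, hne_F3_F4, hne_F3_N1, hne_F3_N2, hne_F3_N3, hne_F4_N1, hne_F4_N2, hne_F4_N3, hne_N1_N2, hne_N1_N3, hne_N2_N3]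

end Main2


/-- the flexible gadget has exactly the seven subtours
`F1, F2, F3, F4, N1, N2, N3`; they are pairwise distinct; `F1` is a single `ZZ'`-path;
`F2` is an `XX'`-path plus a `ZZ'`-path; `F3` is a `YY'`-path plus a `ZZ'`-path; `F4`
consists of an `XX'`-path, a `YY'`-path and a `ZZ'`-path; and none of `N1, N2, N3` is
of one of these four standard types. -/
theorem stmt_10 :
    (∀ T : Set (Sym2 FGV), IsFlexSubtour T ↔
      (T = F1 ∨ T = F2 ∨ T = F3 ∨ T = F4 ∨ T = N1 ∨ T = N2 ∨ T = N3)) ∧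
    [F1, F2, F3, F4, N1, N2, N3].Nodup ∧
    IsOnePath (SimpleGraph.fromEdgeSet F1) Z Z' ∧
    IsTwoPaths (SimpleGraph.fromEdgeSet F2) X X' Z Z' ∧
    IsTwoPaths (SimpleGraph.fromEdgeSet F3) Y Y' Z Z' ∧
    IsThreePaths (SimpleGraph.fromEdgeSet F4) X X' Y Y' Z Z' ∧
    ¬ IsStandardType N1 ∧ ¬ IsStandardType N2 ∧ ¬ IsStandardType N3 := by
  refine ⟨?_, nodup_list, onepath_F1, twopaths_F2, twopaths_F3, threepaths_F4,
    notstd_N1, notstd_N2, notstd_N3⟩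
  intro T
  constructor
  · exact forward_subtour T
  · rintro (rfl | rfl | rfl | rfl | rfl | rfl | rfl)
    exacts [isft_F1, isft_F2, isft_F3, isft_F4, isft_N1, isft_N2, isft_N3]
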